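/- Bias of the naive volume-rendering weight: let g(t) = -c(t - t*) with c > 0 (affine SDF along a ray), σ(t) = φ_s(g(t)), T(t) = exp(-∫₀^t σ), and w(t) = T(t)σ(t). Then w'(t*) = -T(t*)·φ_s(0)² < 0; in particular w does not attain a local maximum at the surface point t*. -/

import Mathlib

open Real Filter MeasureTheory

/-- The sigmoid function `Φ_s(x) = (1 + e^{-sx})⁻¹`. -/
noncomputable def Phi (s x : ℝ) : ℝ := (1 + Real.exp (-s * x))⁻¹

/-- The logistic density `φ_s(x) = s e^{-sx} / (1 + e^{-sx})²`. -/
noncomputable def phi (s x : ℝ) : ℝ :=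
  s * Real.exp (-s * x) / (1 + Real.exp (-s * x)) ^ 2

lemma phi_continuous (s : ℝ) : Continuous (phi s) := by
  unfold phi
  apply Continuous.div
  · continuity
  · continuity
  · intro x
    have := Real.exp_pos (-s * x)
    positivity

lemma phi_hasDerivAt_zero (s : ℝ) : HasDerivAt (phi s) 0 0 := by
  have h1 : HasDerivAt (fun x : ℝ => s * Real.exp (-s * x)) (-s ^ 2) 0 := by
    have hi : HasDerivAt (fun x : ℝ => -s * x) (-s) 0 := by
      simpa [neg_mul] using (hasDerivAt_id (0:ℝ)).const_mul (-s)
    have : HasDerivAt (fun x : ℝ => Real.exp (-s * x)) (Real.exp (-s * 0) * (-s)) 0 :=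
      (Real.hasDerivAt_exp _).comp 0 hi
    have := this.const_mul s
    refine this.congr_deriv ?_
    simp; ring
  have h2 : HasDerivAt (fun x : ℝ => (1 + Real.exp (-s * x)) ^ 2) (-4 * s) 0 := by
    have hin : HasDerivAt (fun x : ℝ => 1 + Real.exp (-s * x)) (-s) 0 := by
      have hi : HasDerivAt (fun x : ℝ => -s * x) (-s) 0 := by
        simpa [neg_mul] using (hasDerivAt_id (0:ℝ)).const_mul (-s)
      have : HasDerivAt (fun x : ℝ => Real.exp (-s * x)) (Real.exp (-s * 0) * (-s)) 0 :=
        (Real.hasDerivAt_exp _).comp 0 hi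
      simpa using this.const_add 1
    have := hin.pow 2
    refine this.congr_deriv ?_
    simp only [mul_zero, neg_zero, Real.exp_zero]
    norm_num
  have hden : (1 + Real.exp (-s * 0)) ^ 2 ≠ 0 := by
    have := Real.exp_pos (-s * 0); positivity
  have := h1.div h2 hden
  refine this.congr_deriv ?_
  simp [Real.exp_zero]
  ring

/-- Bias of the naive weight: for `g(t) = -c(t - t*)`, `σ(t) = φ_s(g(t))`,
`T(t) = exp(-∫₀^t σ)` and `w = T σ`, one has
`w'(t*) = -T(t*) φ_s(0)² < 0`; in particular `w` has no local maximum at the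
surface point `t*`. -/
theorem naive_weight_biased (s c tstar : ℝ) (hs : 0 < s) (hc : 0 < c)
    (σ T w : ℝ → ℝ)
    (hσ : σ = fun t => phi s (-c * (t - tstar)))
    (hT : T = fun t => Real.exp (-(∫ u in (0 : ℝ)..t, σ u)))
    (hw : w = fun t => T t * σ t) :
    HasDerivAt w (-(T tstar) * (phi s 0) ^ 2) tstar ∧
      -(T tstar) * (phi s 0) ^ 2 < 0 := by
  have hσcont : Continuous σ := by
    rw [hσ]; exact (phi_continuous s).comp (by continuity)
  have hσtstar : σ tstar = phi s 0 := by rw [hσ]; simp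
  -- derivative of σ at tstar is 0
  have hσderiv : HasDerivAt σ 0 tstar := by
    rw [hσ]
    have hinner : HasDerivAt (fun t : ℝ => -c * (t - tstar)) (-c) tstar := by
      simpa using ((hasDerivAt_id tstar).sub_const tstar).const_mul (-c)
    have h0 : HasDerivAt (phi s) 0 (-c * (tstar - tstar)) := by
      rw [show -c * (tstar - tstar) = 0 by ring]; exact phi_hasDerivAt_zero s
    have := h0.comp tstar hinner
    exact this.congr_deriv (by simp)
  -- derivative of the integral
  have hint : HasDerivAt (fun t => ∫ u in (0:ℝ)..t, σ u) (σ tstar) tstar := by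
    exact intervalIntegral.integral_hasDerivAt_right (hσcont.intervalIntegrable 0 tstar)
      (hσcont.stronglyMeasurableAtFilter _ _) hσcont.continuousAt
  have hTderiv : HasDerivAt T (-(σ tstar) * T tstar) tstar := by
    rw [hT]
    have := (Real.hasDerivAt_exp (-(∫ u in (0:ℝ)..tstar, σ u))).comp tstar hint.neg
    refine this.congr_deriv ?_
    ring
  have hwderiv : HasDerivAt w (-(T tstar) * (phi s 0) ^ 2) tstar := by
    rw [hw]
    have := hTderiv.mul hσderiv
    refine this.congr_deriv ?_
    rw [hσtstar]; ring
  refine ⟨hwderiv, ?_⟩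
  have hTpos : 0 < T tstar := by rw [hT]; exact Real.exp_pos _
  have hphipos : 0 < phi s 0 := by
    unfold phi
    have := Real.exp_pos (-s * 0)
    positivity
  nlinarith [sq_nonneg (phi s 0), mul_pos hTpos (pow_pos hphipos 2)]
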